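/- Let p > 3 be a prime with p ≡ 3 (mod 4). The number of projective points on the elliptic curve y^2 = x^3 - x over F_p is exactly p + 1. -/
import Mathlib

open Finset

/-- For a prime `p > 3` with `p ≡ 3 (mod 4)`, the number of projective points on the
elliptic curve `y² = x³ - x` over `F_p` (affine points plus the single point at infinity)
is exactly `p + 1`. -/
theorem stmt_5 (p : ℕ) [Fact p.Prime] (hp : 3 < p) (hmod : p % 4 = 3) :
    Nat.card {v : ZMod p × ZMod p // v.2 ^ 2 = v.1 ^ 3 - v.1} + 1 = p + 1 := by
  have hp2 : p ≠ 2 := by omega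
  have hchar : ringChar (ZMod p) ≠ 2 := by
    rw [ZMod.ringChar_zmod_n]; exact hp2
  have hcard : Fintype.card (ZMod p) = p := ZMod.card p
  have hχneg : quadraticChar (ZMod p) (-1) = -1 := by
    rw [quadraticChar_neg_one hchar, hcard]
    exact ZMod.χ₄_nat_three_mod_four hmod
  have hsum : ∑ x : ZMod p, quadraticChar (ZMod p) (x ^ 3 - x) = 0 := by
    have h1 : ∑ x : ZMod p, quadraticChar (ZMod p) ((-x) ^ 3 - (-x))
        = ∑ x : ZMod p, quadraticChar (ZMod p) (x ^ 3 - x) :=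
      Fintype.sum_equiv (Equiv.neg (ZMod p)) _ _ (fun x => rfl)
    have h2 : ∀ x : ZMod p, quadraticChar (ZMod p) ((-x) ^ 3 - (-x))
        = - quadraticChar (ZMod p) (x ^ 3 - x) := by
      intro x
      have h3 : (-x) ^ 3 - (-x) = (-1) * (x ^ 3 - x) := by ring
      rw [h3, map_mul, hχneg]; ring
    simp_rw [h2, Finset.sum_neg_distrib] at h1
    linarith
  have key : (Nat.card {v : ZMod p × ZMod p // v.2 ^ 2 = v.1 ^ 3 - v.1} : ℤ) = p := by
    rw [Nat.card_eq_fintype_card,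
      Fintype.card_congr (Equiv.subtypeProdEquivSigmaSubtype
        (fun a b : ZMod p => b ^ 2 = a ^ 3 - a)),
      Fintype.card_sigma]
    push_cast
    have h4 : ∀ a : ZMod p, (Fintype.card {b : ZMod p // b ^ 2 = a ^ 3 - a} : ℤ)
        = quadraticChar (ZMod p) (a ^ 3 - a) + 1 := by
      intro a
      rw [Fintype.card_subtype, ← Set.toFinset_setOf]
      exact quadraticChar_card_sqrts hchar (a ^ 3 - a)
    simp_rw [h4]
    rw [Finset.sum_add_distrib, hsum]
    simp [hcard]
  omega
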